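/- arXiv:2106.13577 — 4 statements merged into one kernel-verified Lean document; each statement's English description precedes it below -/
import Mathlib

section
/- Let G be a finite group, H ≤ G a subgroup, and S ⊆ G a subset. Then there exists a subset S̄ ⊆ H of size at most [G:H]·|S| such that diam(H,S̄) ≤ diam(G,S). -/
open scoped ENNReal

/-- `groupDiam G S` is the diameter of `G` with respect to `S : Finset G`:
the least natural number `n` such that every element of `G` is a product of at most `n`
elements of `S` (the identity being the empty product), viewed in `ℕ∞`;
it equals `⊤` (infinity) if no such `n` exists, in particular if `S` does not generate `G`. -/
noncomputable def groupDiam (G : Type*) [Group G] (S : Finset G) : ℕ∞ :=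
  sInf {N : ℕ∞ | ∃ n : ℕ, N = (n : ℕ∞) ∧
    ∀ g : G, ∃ l : List G, l.length ≤ n ∧ (∀ x ∈ l, x ∈ S) ∧ l.prod = g}

open scoped Classical

section Schreier

variable {G : Type} [Group G]

/-- Schreier representative function: a canonical representative of the right coset `Hg`,
chosen to be `1` on `H` itself. -/
noncomputable def schF (H : Subgroup G) (g : G) : G :=
  if g ∈ H then 1 else ((QuotientGroup.mk g⁻¹ : G ⧸ H).out)⁻¹

theorem schF_key (H : Subgroup G) (g : G) : g * (schF H g)⁻¹ ∈ H := by
  unfold schF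
  split_ifs with h
  · simpa using h
  · have h1 : (QuotientGroup.mk ((QuotientGroup.mk g⁻¹ : G ⧸ H).out) : G ⧸ H)
        = QuotientGroup.mk g⁻¹ := Quotient.out_eq _
    have h2 := QuotientGroup.eq.mp h1
    simpa [mul_comm] using H.inv_mem h2

theorem schF_const (H : Subgroup G) {h : G} (hh : h ∈ H) (g : G) :
    schF H (h * g) = schF H g := by
  have e1 : (QuotientGroup.mk ((h*g)⁻¹) : G ⧸ H) = QuotientGroup.mk g⁻¹ := by
    rw [QuotientGroup.eq]
    simpa using H.inv_mem hh
  have e2 : (h * g ∈ H) = (g ∈ H) := by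
    simp only [eq_iff_iff]
    constructor
    · intro hm; simpa using H.mul_mem (H.inv_mem hh) hm
    · intro hm; exact H.mul_mem hh hm
  unfold schF
  rw [e1, e2]

theorem schF_mem (H : Subgroup G) {g : G} (hg : g ∈ H) : schF H g = 1 := by
  unfold schF; rw [if_pos hg]

theorem schF_idem (H : Subgroup G) (g : G) : schF H (schF H g) = schF H g := by
  have key := schF_key H g
  have : schF H g = (g * (schF H g)⁻¹)⁻¹ * g := by group
  conv_lhs => rw [this]
  rw [schF_const H (H.inv_mem key), this]

end Schreier

theorem schList {G : Type} [Group G] (H : Subgroup G) (S : Finset G) :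
    ∀ (l : List G), (∀ x ∈ l, x ∈ S) → ∀ a : G, ∃ m : List H,
      m.length = l.length ∧
      (∀ x ∈ m, ∃ b s, s ∈ S ∧
        (x : G) = schF H b * s * (schF H (schF H b * s))⁻¹) ∧
      (m.prod : G) = schF H a * l.prod * (schF H (schF H a * l.prod))⁻¹ := by
  intro l
  induction l with
  | nil =>
    intro _ a
    refine ⟨[], rfl, by simp, ?_⟩
    simp [schF_idem]
  | cons s l' ih =>
    intro hl a
    obtain ⟨m', hm'len, hm'mem, hm'prod⟩ := ih (fun x hx => hl x (by simp [hx])) (schF H a * s)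
    set t := schF H a with ht
    refine ⟨⟨t * s * (schF H (t * s))⁻¹, schF_key H (t * s)⟩ :: m', by simp [hm'len], ?_, ?_⟩
    · intro x hx
      rcases List.mem_cons.mp hx with h | h
      · exact ⟨a, s, hl s (by simp), by rw [h]⟩
      · exact hm'mem x h
    · have hrw : schF H (schF H (t * s) * l'.prod) = schF H (t * s * l'.prod) := by
        have : schF H (t * s) = ((t * s) * (schF H (t * s))⁻¹)⁻¹ * (t * s) := by group
        rw [this, mul_assoc, schF_const H (H.inv_mem (schF_key H (t * s)))]
      have hts : schF H (schF H (t*s)) = schF H (t*s) := schF_idem H _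
      simp only [List.prod_cons, MulMemClass.coe_mul]
      rw [hm'prod, hrw, ← mul_assoc t s l'.prod]
      group

/-- **Lemma (Reidemeister–Schreier).**
Let `G` be a finite group, `H ≤ G` and `S ⊆ G`. Then there exists `S̄ ⊆ H` of size
at most `[G:H]·|S|` such that `diam(H,S̄) ≤ diam(G,S)`. -/
theorem stmt_5 (G : Type) [Group G] [Fintype G] (H : Subgroup G) (S : Finset G) :
    ∃ Sbar : Finset H, Sbar.card ≤ H.index * S.card ∧
      groupDiam H Sbar ≤ groupDiam G S := by
  classical
  set T : Finset G := Finset.univ.image (schF H) with hT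
  refine ⟨(T ×ˢ S).image
      (fun p => (⟨p.1 * p.2 * (schF H (p.1 * p.2))⁻¹, schF_key H _⟩ : H)), ?_, ?_⟩
  · calc _ ≤ (T ×ˢ S).card := Finset.card_image_le
      _ = T.card * S.card := Finset.card_product _ _
      _ ≤ H.index * S.card := by
          apply Nat.mul_le_mul_right
          -- T.card ≤ H.index
          have hfac : T = (Finset.univ.image (fun g : G => (QuotientGroup.mk g⁻¹ : G ⧸ H))).image
              (fun q : G ⧸ H => if q = QuotientGroup.mk 1 then 1 else (Quotient.out q)⁻¹) := by
            rw [hT, Finset.image_image]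
            apply Finset.image_congr
            intro g _
            have hiff : ((QuotientGroup.mk g⁻¹ : G ⧸ H) = QuotientGroup.mk 1) ↔ g ∈ H := by
              rw [QuotientGroup.eq]; simp
            unfold schF
            by_cases h : g ∈ H
            · simp only [Function.comp_apply, if_pos h, if_pos (hiff.mpr h)]
            · simp only [Function.comp_apply, if_neg h, if_neg (fun c => h (hiff.mp c))]
          haveI : Fintype (G ⧸ H) := Fintype.ofFinite _
          calc T.card ≤ (Finset.univ.image (fun g : G => (QuotientGroup.mk g⁻¹ : G ⧸ H))).card := by
                rw [hfac]; exact Finset.card_image_le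
            _ ≤ Fintype.card (G ⧸ H) := Finset.card_le_univ _
            _ = H.index := by rw [Subgroup.index_eq_card, Nat.card_eq_fintype_card]
  · apply sInf_le_sInf
    rintro N ⟨n, rfl, hn⟩
    refine ⟨n, rfl, ?_⟩
    rintro ⟨g, hg⟩
    obtain ⟨l, hlen, hmem, hprod⟩ := hn g
    obtain ⟨m, hmlen, hmmem, hmprod⟩ := schList H S l hmem 1
    refine ⟨m, by omega, ?_, ?_⟩
    · intro x hx
      obtain ⟨b, s, hs, hxeq⟩ := hmmem x hx
      refine Finset.mem_image.mpr ⟨(schF H b, s), Finset.mem_product.mpr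
        ⟨Finset.mem_image.mpr ⟨b, Finset.mem_univ b, rfl⟩, hs⟩, ?_⟩
      exact (Subtype.ext hxeq).symm
    · apply Subtype.ext
      rw [hmprod, schF_mem H H.one_mem, hprod, one_mul, schF_mem H hg]
      simp
end

section
/- Let G be a finite group, and let H ≤ G be a subgroup of minimal order among all subgroups K ≤ G for which the order |K/[K,K]| of the abelianization is maximal (over all subgroups of G). Then H is nilpotent of class at most 2. -/
open Subgroup Function Pointwise
open scoped commutatorElement

variable {A B : Type} [Group A] [Group B]

lemma cardAb_le_of_surjective [Finite A] (f : A →* B) (hf : Surjective f) :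
    Nat.card (Abelianization B) ≤ Nat.card (Abelianization A) := by
  have hA : Surjective (Abelianization.of (G := A)) := fun y => Quotient.exists_rep y
  have hB : Surjective (Abelianization.of (G := B)) := fun y => Quotient.exists_rep y
  have hFin : Finite (Abelianization A) := Finite.of_surjective _ hA
  have hs : Surjective (Abelianization.map f) := by
    intro y
    obtain ⟨b, rfl⟩ := hB y
    obtain ⟨a, rfl⟩ := hf b
    exact ⟨Abelianization.of a, Abelianization.map_of f a⟩
  exact Nat.card_le_card_of_surjective _ hs

lemma cardAb_quot_eq {G : Type} [Group G] [Finite G] (N : Subgroup G) [N.Normal]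
    (hN : N ≤ commutator G) :
    Nat.card (Abelianization (G ⧸ N)) = Nat.card (Abelianization G) := by
  refine le_antisymm (cardAb_le_of_surjective _ (QuotientGroup.mk'_surjective N)) ?_
  have hker : ∀ x ∈ N, Abelianization.of x = (1 : Abelianization G) := fun x hx =>
    (QuotientGroup.eq_one_iff x).mpr (hN hx)
  let f : (G ⧸ N) →* Abelianization G := QuotientGroup.lift N Abelianization.of hker
  let g : Abelianization (G ⧸ N) →* Abelianization G := Abelianization.lift f
  have hs : Surjective g := by
    intro y
    obtain ⟨x, rfl⟩ : ∃ x, Abelianization.of x = y := Quotient.exists_rep y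
    exact ⟨Abelianization.of (QuotientGroup.mk x), by simp [g, f]; rfl⟩
  exact Nat.card_le_card_of_surjective _ hs

def Crit (G : Type) [Group G] : Prop :=
  ∀ K : Subgroup G, K ≠ ⊤ → Nat.card (Abelianization K) < Nat.card (Abelianization G)

lemma homcount {p : ℕ} (hp : p.Prime) :
    ∀ (n : ℕ) (X : Type) [CommGroup X] [Finite X] (T : Type) [Group T],
      Nat.card X = n → Nat.card T = p → Nat.card (X →* T) ≤ Nat.card X := by
  intro n
  induction n using Nat.strong_induction_on with
  | _ n ih =>
    intro X _ _ T _ hX hT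
    haveI : Fact p.Prime := ⟨hp⟩
    haveI : Finite T := Nat.finite_of_card_ne_zero (by rw [hT]; exact hp.pos.ne')
    haveI : Finite (X →* T) := Finite.of_injective _ DFunLike.coe_injective
    letI : CommGroup T := (isCyclic_of_prime_card hT).commGroup
    by_cases hdvd : p ∣ Nat.card X
    · -- Cauchy: pick b of order p
      obtain ⟨b, hb⟩ := exists_prime_orderOf_dvd_card' p hdvd
      set B : Subgroup X := Subgroup.zpowers b with hB
      have hcardB : Nat.card B = p := by rw [Nat.card_zpowers, hb]
      -- restriction homomorphism
      let r : (X →* T) →* (B →* T) :=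
        { toFun := fun φ => φ.comp B.subtype
          map_one' := rfl
          map_mul' := fun φ ψ => rfl }
      -- range bound: (B →* T) injects in T via evaluation at b
      have hbB : b ∈ B := Subgroup.mem_zpowers b
      haveI : Finite (B →* T) := Finite.of_injective _ DFunLike.coe_injective
      have hinj : Injective (fun φ : B →* T => φ ⟨b, hbB⟩) := by
        intro φ ψ h
        have h' : φ ⟨b, hbB⟩ = ψ ⟨b, hbB⟩ := h
        ext ⟨x, hx⟩
        obtain ⟨k, hk⟩ := id hx
        have hxb : (⟨x, hx⟩ : B) = (⟨b, hbB⟩ : B) ^ k := by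
          ext; simpa using hk.symm
        rw [hxb, map_zpow, map_zpow, h']
      have hrange : Nat.card (B →* T) ≤ p := by
        calc Nat.card (B →* T) ≤ Nat.card T := Nat.card_le_card_of_injective _ hinj
        _ = p := hT
      -- kernel bound : ker r injects into (X ⧸ B →* T)
      have hkerinj : ∀ φ : (X →* T), φ ∈ r.ker → B ≤ φ.ker := by
        intro φ hφ x hx
        have : φ.comp B.subtype = 1 := hφ
        have := DFunLike.congr_fun this ⟨x, hx⟩
        simpa using this
      haveI : Finite ((X ⧸ B) →* T) := Finite.of_injective _ DFunLike.coe_injective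
      have hker : Nat.card r.ker ≤ Nat.card (X ⧸ B) := by
        have hinj2 : Injective (fun φ : r.ker =>
            (QuotientGroup.lift B (φ : X →* T) (hkerinj φ φ.2) : (X ⧸ B) →* T)) := by
          intro φ ψ h
          ext x
          have := DFunLike.congr_fun h (QuotientGroup.mk x)
          simpa using this
        calc Nat.card r.ker ≤ Nat.card ((X ⧸ B) →* T) := Nat.card_le_card_of_injective _ hinj2
        _ ≤ Nat.card (X ⧸ B) := by
            refine ih (Nat.card (X ⧸ B)) ?_ (X ⧸ B) T rfl hT
            rw [← hX, Subgroup.card_eq_card_quotient_mul_card_subgroup B, hcardB]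
            have : 0 < Nat.card (X ⧸ B) := Nat.card_pos
            nlinarith [hp.one_lt]
      -- combine
      have hsplit : Nat.card (X →* T) = r.ker.index * Nat.card r.ker := (r.ker.index_mul_card).symm
      have hindex : r.ker.index ≤ p := by
        have hidx : r.ker.index = Nat.card r.range := by
          rw [Subgroup.index]
          exact Nat.card_congr (QuotientGroup.quotientKerEquivRange r).toEquiv
        rw [hidx]
        calc Nat.card r.range ≤ Nat.card (B →* T) :=
          Nat.card_le_card_of_injective _ Subtype.val_injective
        _ ≤ p := hrange
      calc Nat.card (X →* T) = r.ker.index * Nat.card r.ker := hsplit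
        _ ≤ p * Nat.card (X ⧸ B) := Nat.mul_le_mul hindex hker
        _ = Nat.card X := by
            rw [Subgroup.card_eq_card_quotient_mul_card_subgroup B, hcardB]; ring
    · -- no element of order p: all homs trivial
      have : ∀ φ : X →* T, φ = 1 := by
        intro φ
        ext x
        have h1 : (φ x) ^ Nat.card X = 1 := by
          rw [← map_pow, pow_card_eq_one', map_one]
        have h2 : orderOf (φ x) ∣ Nat.card X := orderOf_dvd_of_pow_eq_one h1
        have h3 : orderOf (φ x) ∣ p := hT ▸ orderOf_dvd_natCard (φ x)
        have : orderOf (φ x) = 1 := by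
          rcases (Nat.dvd_prime hp).mp h3 with h | h
          · exact h
          · exact absurd (h ▸ h2) hdvd
        simpa [orderOf_eq_one_iff] using this
      haveI : Subsingleton (X →* T) := ⟨fun a c => (this a).trans (this c).symm⟩
      calc Nat.card (X →* T) ≤ 1 := le_of_eq (Nat.card_of_subsingleton (1 : X →* T))
        _ ≤ Nat.card X := Nat.one_le_iff_ne_zero.mpr Nat.card_pos.ne'

theorem main_lemma :
    ∀ (n : ℕ) (G : Type) [Group G] [Finite G], Nat.card G = n → Crit G →
      commutator G ≤ Subgroup.center G := by
  intro n
  induction n using Nat.strong_induction_on with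
  | _ n ih =>
    intro G _ _ hn hcrit
    by_cases hcomm : commutator G = ⊥
    · rw [hcomm]; exact bot_le
    have hAbFin : ∀ (K : Subgroup G), Finite (Abelianization K) :=
      fun K => Finite.of_surjective _ (fun y => Quotient.exists_rep y)
    -- Step NG: a subgroup joining with the commutator to the whole group is everything
    have hNG : ∀ K : Subgroup G, K ⊔ commutator G = ⊤ → K = ⊤ := by
      intro K hK
      by_contra hKne
      have hlt := hcrit K hKne
      -- surjection Abelianization K → Abelianization G
      let F : Abelianization K →* Abelianization G :=
        Abelianization.lift ((Abelianization.of).comp K.subtype)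
      have hs : Surjective F := by
        intro y
        obtain ⟨g, rfl⟩ : ∃ g, Abelianization.of g = y := Quotient.exists_rep y
        have hg : g ∈ ((K : Set G) * ((commutator G : Subgroup G) : Set G)) := by
          rw [← Subgroup.mul_normal K (commutator G)]
          exact hK ▸ Subgroup.mem_top g
        obtain ⟨k, hk, c, hc, rfl⟩ := hg
        refine ⟨Abelianization.of ⟨k, hk⟩, ?_⟩
        have hc1 : Abelianization.of c = (1 : Abelianization G) :=
          (QuotientGroup.eq_one_iff c).mpr hc
        simp [F, map_mul, hc1]
      have := Nat.card_le_card_of_surjective _ hs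
      omega
    -- Step: all Sylow subgroups are normal
    have hSyl : ∀ (p : ℕ) (_ : Fact p.Prime) (P : Sylow p G), (↑P : Subgroup G).Normal := by
      intro p hp P
      set W : Subgroup G := ↑P ⊔ commutator G with hW
      haveI hWn : W.Normal := by
        constructor
        intro w hw g
        have h1 : g * w * g⁻¹ = ⁅g, w⁆ * w := by group
        rw [h1]
        have hcw : commutator G ≤ W := le_sup_right
        exact W.mul_mem (hcw (Subgroup.commutator_mem_commutator
          (Subgroup.mem_top g) (Subgroup.mem_top w))) hw
      have hPW : ↑P ≤ W := le_sup_left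
      have hfr := Sylow.normalizer_sup_eq_top' P hPW
      have h2 : normalizer ((↑P : Subgroup G) : Set G) ⊔ commutator G = ⊤ := by
        rw [← hfr, hW, ← sup_assoc, ← P.coe_coe, sup_of_le_left (Subgroup.le_normalizer)]
      exact Subgroup.normalizer_eq_top_iff.mp (hNG _ h2)
    have hnil : Group.IsNilpotent G := ((isNilpotent_of_finite_tfae (G := G)).out 3 0).mp hSyl
    -- find a central element of prime order inside the commutator subgroup
    have hnt : Nontrivial G := by
      by_contra h
      haveI := not_nontrivial_iff_subsingleton.mp h
      exact hcomm (Subsingleton.elim _ _)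
    obtain ⟨w, q, hq, hw_comm, hw_center, hw_order⟩ :
        ∃ (w : G) (q : ℕ), q.Prime ∧ w ∈ commutator G ∧ w ∈ Subgroup.center G ∧
          orderOf w = q := by
      classical
      obtain ⟨k, hk⟩ := _root_.nilpotent_iff_lowerCentralSeries.mp hnil
      have hex : ∃ m, Subgroup.lowerCentralSeries ⊤ m = ⊥ := ⟨k, hk⟩
      set m := Nat.find hex with hm
      have hspec : Subgroup.lowerCentralSeries ⊤ m = ⊥ := Nat.find_spec hex
      have hm1 : 1 < m := by
        by_contra h
        push_neg at h
        interval_cases m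
        · rw [Subgroup.lowerCentralSeries_zero] at hspec
          obtain ⟨x, y, hxy⟩ := hnt
          apply hxy
          have hx : x ∈ (⊥ : Subgroup G) := hspec ▸ Subgroup.mem_top x
          have hy : y ∈ (⊥ : Subgroup G) := hspec ▸ Subgroup.mem_top y
          rw [Subgroup.mem_bot] at hx hy
          rw [hx, hy]
        · rw [Subgroup.top_lowerCentralSeries_one] at hspec
          exact hcomm hspec
      set L := Subgroup.lowerCentralSeries (⊤ : Subgroup G) (m - 1) with hL
      have hLne : L ≠ ⊥ := Nat.find_min hex (by omega)
      have hLcenter : L ≤ Subgroup.center G := by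
        have h3 : ⁅L, ⊤⁆ = (⊥ : Subgroup G) := by
          have : Subgroup.lowerCentralSeries ⊤ ((m-1)+1) = ⁅L, ⊤⁆ := rfl
          rw [← this, show m - 1 + 1 = m by omega, hspec]
        have h4 := Subgroup.commutator_eq_bot_iff_le_centralizer.mp h3
        rwa [Subgroup.coe_top, Subgroup.centralizer_univ] at h4
      have hLcomm : L ≤ commutator G := by
        have := Subgroup.lowerCentralSeries_antitone (⊤ : Subgroup G) (show 1 ≤ m - 1 by omega)
        rwa [Subgroup.top_lowerCentralSeries_one] at this
      obtain ⟨z, hzL, hz1⟩ := (L.bot_or_exists_ne_one).resolve_left hLne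
      have hord : orderOf z ≠ 1 := by
        simpa [orderOf_eq_one_iff] using hz1
      set q := (orderOf z).minFac with hqdef
      have hq : q.Prime := Nat.minFac_prime hord
      have hdvd : q ∣ orderOf z := Nat.minFac_dvd _
      refine ⟨z ^ (orderOf z / q), q, hq, hLcomm (L.pow_mem hzL _), hLcenter (L.pow_mem hzL _), ?_⟩
      exact orderOf_pow_orderOf_div (orderOf_pos z).ne' hdvd
    -- the central subgroup N of prime order inside the commutator subgroup
    set N : Subgroup G := Subgroup.zpowers w with hNdef
    have hNle_center : N ≤ Subgroup.center G := Subgroup.zpowers_le.mpr hw_center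
    haveI hNn : N.Normal := by
      constructor
      intro x hx g
      have hc := Subgroup.mem_center_iff.mp (hNle_center hx) g
      have hgx : g * x * g⁻¹ = x := by rw [hc]; group
      rw [hgx]; exact hx
    have hNcomm : N ≤ commutator G := Subgroup.zpowers_le.mpr hw_comm
    have hcardN : Nat.card N = q := by rw [hNdef, Nat.card_zpowers, hw_order]
    -- criticality passes to the quotient by N
    have hcritQ : Crit (G ⧸ N) := by
      intro Kb hKb
      set K : Subgroup G := Kb.comap (QuotientGroup.mk' N) with hKdef
      have hKb_eq : Kb = K.map (QuotientGroup.mk' N) :=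
        (Subgroup.map_comap_eq_self_of_surjective (QuotientGroup.mk'_surjective N) Kb).symm
      have hKne : K ≠ ⊤ := by
        intro h
        apply hKb
        rw [hKb_eq, h, Subgroup.map_top_of_surjective _ (QuotientGroup.mk'_surjective N)]
      have h1 : Nat.card (Abelianization Kb) ≤ Nat.card (Abelianization K) := by
        rw [hKb_eq]
        exact cardAb_le_of_surjective ((QuotientGroup.mk' N).subgroupMap K)
          (MonoidHom.subgroupMap_surjective _ _)
      calc Nat.card (Abelianization Kb) ≤ Nat.card (Abelianization K) := h1
        _ < Nat.card (Abelianization G) := hcrit K hKne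
        _ = Nat.card (Abelianization (G ⧸ N)) := (cardAb_quot_eq N hNcomm).symm
    have hcardQ : Nat.card (G ⧸ N) < n := by
      have h := Subgroup.card_eq_card_quotient_mul_card_subgroup N
      rw [hcardN, hn] at h
      have hpos : 0 < Nat.card (G ⧸ N) := Nat.card_pos
      nlinarith [hq.two_le]
    have hQle : commutator (G ⧸ N) ≤ Subgroup.center (G ⧸ N) :=
      ih _ hcardQ (G ⧸ N) rfl hcritQ
    -- hence all triple commutators land in N
    have hg3 : ∀ c ∈ commutator G, ∀ x : G, ⁅c, x⁆ ∈ N := by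
      intro c hc x
      have hmkc : (QuotientGroup.mk c : G ⧸ N) ∈ commutator (G ⧸ N) := by
        have h1 : (QuotientGroup.mk c : G ⧸ N) ∈ (commutator G).map (QuotientGroup.mk' N) :=
          Subgroup.mem_map_of_mem _ hc
        have h2 : (commutator G).map (QuotientGroup.mk' N) ≤ commutator (G ⧸ N) := by
          rw [_root_.commutator_def, Subgroup.map_commutator]
          exact Subgroup.commutator_mono le_top le_top
        exact h2 h1
      have hcen := hQle hmkc
      have h3 : (QuotientGroup.mk ⁅c, x⁆ : G ⧸ N) = 1 := by
        have h4 : (QuotientGroup.mk ⁅c, x⁆ : G ⧸ N) =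
            ⁅(QuotientGroup.mk c : G ⧸ N), (QuotientGroup.mk x : G ⧸ N)⁆ := by
          rfl
        rw [h4]
        exact commutatorElement_eq_one_iff_commute.mpr
          ((Subgroup.mem_center_iff.mp hcen _).symm)
      exact (QuotientGroup.eq_one_iff _).mp h3
    -- the centralizer of the commutator subgroup
    set C : Subgroup G := Subgroup.centralizer (commutator G : Set G) with hCdef
    by_cases hCtop : C = ⊤
    · intro c hc
      rw [Subgroup.mem_center_iff]
      intro g
      have hg : g ∈ C := hCtop ▸ Subgroup.mem_top g
      exact (Subgroup.mem_centralizer_iff.mp hg c hc).symm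
    · exfalso
      have hClt := hcrit C hCtop
      set D : Subgroup G := ⁅C, C⁆ with hDdef
      have hD_center : D ≤ Subgroup.center G :=
        commutator_centralizer_commutator_le_center G
      have hD_comm : D ≤ commutator G := Subgroup.commutator_mono le_top le_top
      have hDmap : (commutator ↥C).map C.subtype = D := by
        rw [_root_.commutator_def, Subgroup.map_commutator]
        congr 1 <;> rw [← MonoidHom.range_eq_map, Subgroup.range_subtype]
      set mC := Nat.card (commutator ↥C) with hmCdef
      have hcardD : Nat.card D = mC := by
        rw [← hDmap]
        exact (Nat.card_congr
          (Subgroup.equivMapOfInjective _ _ C.subtype_injective).toEquiv).symm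
      set CommG : Subgroup G := commutator G with hCommGdef
      set ZM : Subgroup ↥CommG := (Subgroup.center G).subgroupOf CommG with hZMdef
      set DM : Subgroup ↥CommG := D.subgroupOf CommG with hDMdef
      have hDZle : DM ≤ ZM := by
        intro x hx
        exact Subgroup.mem_subgroupOf.mpr (hD_center (Subgroup.mem_subgroupOf.mp hx))
      have hcardDM : Nat.card DM = mC := by
        rw [← hcardD]
        exact Nat.card_congr (Subgroup.subgroupOfEquivOfLe hD_comm).toEquiv
      -- the quotient CommG/ZM is commutative
      have hmulcomm : ∀ a b : ↥CommG ⧸ ZM, a * b = b * a := by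
        intro a b
        obtain ⟨a, rfl⟩ := QuotientGroup.mk_surjective a
        obtain ⟨b, rfl⟩ := QuotientGroup.mk_surjective b
        show QuotientGroup.mk (a * b) = QuotientGroup.mk (b * a)
        refine QuotientGroup.eq.mpr ?_
        have hval : ((a * b)⁻¹ * (b * a) : ↥CommG) = ⁅b⁻¹, a⁻¹⁆ := by group
        rw [hval]
        refine Subgroup.mem_subgroupOf.mpr ?_
        have : ((⁅b⁻¹, a⁻¹⁆ : ↥CommG) : G) = ⁅((b⁻¹ : ↥CommG) : G), ((a⁻¹ : ↥CommG) : G)⁆ := rfl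
        rw [this]
        exact hNle_center (hg3 _ (CommG.inv_mem b.2) _)
      letI : CommGroup (↥CommG ⧸ ZM) :=
        { (inferInstance : Group (↥CommG ⧸ ZM)) with mul_comm := hmulcomm }
      -- building the pairing homomorphisms
      have hpsi_mem : ∀ (x : G) (c : ↥CommG), ⁅(c : G), x⁆ ∈ N := fun x c => hg3 _ c.2 x
      have key_mul : ∀ (x : G) (c₁ c₂ : ↥CommG),
          ⁅((c₁ : G) * (c₂ : G)), x⁆ = ⁅(c₁ : G), x⁆ * ⁅(c₂ : G), x⁆ := by
        intro x c₁ c₂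
        have h2 := Subgroup.mem_center_iff.mp (hNle_center (hpsi_mem x c₂))
        have hid : ⁅((c₁ : G) * (c₂ : G)), x⁆ =
            (c₁ : G) * ⁅(c₂ : G), x⁆ * (c₁ : G)⁻¹ * ⁅(c₁ : G), x⁆ := by group
        rw [hid, h2 (c₁ : G)]
        have : ⁅(c₂ : G), x⁆ * (c₁ : G) * (c₁ : G)⁻¹ * ⁅(c₁ : G), x⁆ =
            ⁅(c₂ : G), x⁆ * ⁅(c₁ : G), x⁆ := by group
        rw [this, h2 ⁅(c₁ : G), x⁆]
      let ψ : G → (↥CommG →* ↥N) := fun x =>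
        { toFun := fun c => ⟨⁅(c : G), x⁆, hpsi_mem x c⟩
          map_one' := by
            ext
            show ⁅(1 : G), x⁆ = 1
            group
          map_mul' := fun c₁ c₂ => by
            ext
            exact key_mul x c₁ c₂ }
      have hZM_killed : ∀ (x : G) (c : ↥CommG), c ∈ ZM → ψ x c = 1 := by
        intro x c hc
        have hcen : (c : G) ∈ Subgroup.center G := Subgroup.mem_subgroupOf.mp hc
        ext
        show ⁅(c : G), x⁆ = 1
        exact commutatorElement_eq_one_iff_commute.mpr
          ((Subgroup.mem_center_iff.mp hcen x).symm)
      let χ : G → ((↥CommG ⧸ ZM) →* ↥N) := fun x =>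
        QuotientGroup.lift ZM (ψ x) (hZM_killed x)
      -- injectivity of the induced map on G ⧸ C
      have hchi_sep : ∀ x y : G, χ x = χ y → x⁻¹ * y ∈ C := by
        intro x y h
        refine Subgroup.mem_centralizer_iff.mpr ?_
        intro s hs
        have heval : ∀ c : ↥CommG, ⁅(c : G), x⁆ = ⁅(c : G), y⁆ := by
          intro c
          have := DFunLike.congr_fun h (QuotientGroup.mk c)
          have h5 : ψ x c = ψ y c := this
          exact congrArg Subtype.val h5
        have hc := heval ⟨s⁻¹, CommG.inv_mem hs⟩
        -- from ⁅s⁻¹,x⁆ = ⁅s⁻¹,y⁆ derive s * (x⁻¹ y) = (x⁻¹ y) * s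
        simp only [commutatorElement_def] at hc
        -- hc : s⁻¹ * x * s * x⁻¹ = s⁻¹ * y * s * y⁻¹  (with inv_inv simp?)
        have h2 : x * s * x⁻¹ = y * s * y⁻¹ := by
          have := congrArg (fun t => s * t) hc
          simpa [mul_assoc] using this
        have h3 := congrArg (fun t => x⁻¹ * t * y) h2
        simpa [mul_assoc] using h3
      haveI : Finite ((↥CommG ⧸ ZM) →* ↥N) := Finite.of_injective _ DFunLike.coe_injective
      have hinj : Injective (fun (xc : G ⧸ C) => χ xc.out) := by
        intro a b h
        rw [← QuotientGroup.out_eq' a, ← QuotientGroup.out_eq' b]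
        exact QuotientGroup.eq.mpr (hchi_sep _ _ h)
      have hiC : C.index ≤ ZM.index := by
        have h1 : Nat.card (G ⧸ C) ≤ Nat.card ((↥CommG ⧸ ZM) →* ↥N) :=
          Nat.card_le_card_of_injective _ hinj
        have h2 : Nat.card ((↥CommG ⧸ ZM) →* ↥N) ≤ Nat.card (↥CommG ⧸ ZM) :=
          homcount hq _ _ _ rfl hcardN
        rw [Subgroup.index_eq_card, Subgroup.index_eq_card]
        omega
      have hZDidx : ZM.index ≤ DM.index :=
        Nat.le_of_dvd (Nat.pos_of_ne_zero DM.index_ne_zero_of_finite)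
          (Subgroup.index_dvd_of_le hDZle)
      -- final arithmetic contradiction
      have e1 : C.index * Nat.card C = Nat.card G := C.index_mul_card
      have e2 : DM.index * Nat.card DM = Nat.card ↥CommG := DM.index_mul_card
      have e4 : Nat.card G = Nat.card (Abelianization G) * Nat.card ↥CommG :=
        Subgroup.card_eq_card_quotient_mul_card_subgroup CommG
      have e5 : Nat.card C = Nat.card (Abelianization ↥C) * mC :=
        Subgroup.card_eq_card_quotient_mul_card_subgroup (commutator ↥C)
      have p2 : 0 < mC := hmCdef ▸ Nat.card_pos
      have p5 : 0 < Nat.card ↥CommG := Nat.card_pos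
      have p6 : 0 < Nat.card (Abelianization ↥C) := Nat.card_pos
      have p7 : 0 < C.index := Nat.pos_of_ne_zero C.index_ne_zero_of_finite
      rw [hcardDM] at e2
      -- combine
      have hfinal : Nat.card G * mC ≤ Nat.card G * mC →  False := by
        intro _
        have key : Nat.card G * mC < Nat.card G * mC := by
          calc Nat.card G * mC = C.index * Nat.card C * mC := by rw [e1]
            _ = C.index * (Nat.card (Abelianization ↥C) * mC) * mC := by rw [e5]
            _ ≤ DM.index * (Nat.card (Abelianization ↥C) * mC) * mC :=
                Nat.mul_le_mul_right _ (Nat.mul_le_mul_right _ (hiC.trans hZDidx))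
            _ = (DM.index * mC) * (Nat.card (Abelianization ↥C) * mC) := by ring
            _ = Nat.card ↥CommG * (Nat.card (Abelianization ↥C) * mC) := by rw [e2]
            _ < Nat.card ↥CommG * (Nat.card (Abelianization G) * mC) := by
                have : Nat.card (Abelianization ↥C) * mC < Nat.card (Abelianization G) * mC :=
                  (Nat.mul_lt_mul_right p2).mpr hClt
                exact (Nat.mul_lt_mul_left p5).mpr this
            _ = (Nat.card (Abelianization G) * Nat.card ↥CommG) * mC := by ring
            _ = Nat.card G * mC := by rw [← e4]
        exact lt_irrefl _ key
      exact hfinal le_rfl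

/-- **Lemma.**
Let `G` be a finite group and `H ≤ G` a subgroup of minimal order among all subgroups
`K ≤ G` for which the order of the abelianization `K/[K,K]` is maximal.
Then `H` is nilpotent of class at most 2, i.e. its commutator subgroup is contained in
its center. -/
theorem stmt_7 (G : Type) [Group G] [Fintype G] (H : Subgroup G)
    (hmax : ∀ K : Subgroup G, Nat.card (Abelianization K) ≤ Nat.card (Abelianization H))
    (hmin : ∀ K : Subgroup G,
      Nat.card (Abelianization H) ≤ Nat.card (Abelianization K) →
      Nat.card H ≤ Nat.card K) :
    commutator H ≤ Subgroup.center H := by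
  have hcrit : Crit H := by
    intro K hK
    set K₀ : Subgroup G := K.map H.subtype with hK₀
    have e : K ≃* K₀ := Subgroup.equivMapOfInjective K H.subtype H.subtype_injective
    have hcard : Nat.card (Abelianization K) = Nat.card (Abelianization K₀) :=
      Nat.card_congr e.abelianizationCongr.toEquiv
    have hle : Nat.card (Abelianization K₀) ≤ Nat.card (Abelianization H) := hmax K₀
    rcases lt_or_eq_of_le (hcard ▸ hle) with h | h
    · exact h
    · exfalso
      apply hK
      have h2 : Nat.card H ≤ Nat.card K₀ := hmin K₀ (by rw [← hcard, h])
      have h3 : Nat.card K₀ = Nat.card K := Nat.card_congr e.toEquiv.symm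
      exact Subgroup.eq_top_of_card_eq K (le_antisymm (Nat.card_le_card_of_injective _ Subtype.val_injective) (h3 ▸ h2))
  exact main_lemma (Nat.card H) H rfl hcrit
end

section
/- Let G be a finite group and H ≤ G a subgroup. Then the number of conjugacy classes of G is at least the number of conjugacy classes of H divided by the index [G:H]; that is, k(G) ≥ k(H)/[G:H]. -/
/-- **Lemma (conjugacy classes of subgroups).**
Let `G` be a finite group and `H ≤ G` a subgroup. Then the number of conjugacy classes
of `G` is at least the number of conjugacy classes of `H` divided by the index `[G:H]`:
`k(G) ≥ k(H)/[G:H]`. -/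
theorem stmt_10 (G : Type) [Group G] [Fintype G] (H : Subgroup G) :
    (Nat.card (ConjClasses H) : ℝ) / (H.index : ℝ) ≤ (Nat.card (ConjClasses G) : ℝ) := by
  have hidx : 0 < H.index := Nat.pos_of_ne_zero Subgroup.index_ne_zero_of_finite
  have key : (Nat.card (ConjClasses H) : ℚ) ≤ Nat.card (ConjClasses G) * H.index := by
    have h1 := Subgroup.commProb_subgroup_le H
    rw [commProb_def', commProb_def'] at h1
    have hH : (0:ℚ) < Nat.card H := Nat.cast_pos.mpr Finite.card_pos
    have hG : (0:ℚ) < Nat.card G := Nat.cast_pos.mpr Finite.card_pos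
    have h2 : (Nat.card H : ℚ) * H.index = Nat.card G := by
      exact_mod_cast H.card_mul_index
    rw [div_le_iff₀ hH, div_mul_eq_mul_div, div_mul_eq_mul_div, le_div_iff₀ hG] at h1
    have hidx' : (0:ℚ) < H.index := Nat.cast_pos.mpr hidx
    nlinarith [h1, h2, hidx', hH]
  rw [div_le_iff₀ (by exact_mod_cast hidx : (0:ℝ) < (H.index : ℝ))]
  exact_mod_cast key
end

section
/- There exists a constant C > 0 such that for every integer n ≥ 2, the wreath product G_n = C₂ ≀ C_n (the semidirect product (C₂)ⁿ ⋊ C_n where C_n acts by cyclically permuting the n coordinates) admits a generating set S of size 2 with diam(G_n, S) ≤ C·n. -/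
open scoped ENNReal

/-- The base group `(C₂)ⁿ` of the wreath product `C₂ ≀ Cₙ`, written multiplicatively and
indexed by `ZMod n`. -/
abbrev WreathBase (n : ℕ) : Type := ZMod n → Multiplicative (ZMod 2)

/-- The automorphism of `(C₂)ⁿ` cyclically shifting the coordinates by `z`. -/
def wreathShift (n : ℕ) (z : ZMod n) : WreathBase n ≃* WreathBase n where
  toFun f := fun i => f (i + z)
  invFun f := fun i => f (i - z)
  left_inv f := funext fun i => by simp
  right_inv f := funext fun i => by simp
  map_mul' f g := rfl

/-- The action of `Cₙ` on `(C₂)ⁿ` by cyclic permutation of the coordinates. -/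
def wreathAction (n : ℕ) : Multiplicative (ZMod n) →* MulAut (WreathBase n) where
  toFun z := wreathShift n z.toAdd
  map_one' := by
    ext f i
    simp [wreathShift]
  map_mul' z w := by
    ext f i
    simp [wreathShift, add_assoc]

/-- The wreath product `C₂ ≀ Cₙ = (C₂)ⁿ ⋊ Cₙ`, where `Cₙ` acts by cyclically permuting
the `n` coordinates. -/
abbrev Wreath (n : ℕ) : Type :=
  SemidirectProduct (WreathBase n) (Multiplicative (ZMod n)) (wreathAction n)

section aux

variable (n : ℕ)

/-- shift of c by τ^m evaluates: -/
lemma wreath_pow_smul (m : ℕ) (c : WreathBase n) (j : ZMod n) :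
    (wreathAction n ((Multiplicative.ofAdd (1 : ZMod n)) ^ m) c) j = c (j + m) := by
  simp [wreathAction, wreathShift]

lemma wreath_prod_range (c : ℕ → WreathBase n) (m : ℕ) :
    ((List.range m).map (fun i =>
        (⟨c i, Multiplicative.ofAdd (1 : ZMod n)⟩ : Wreath n))).prod
      = ⟨fun j => ∏ i ∈ Finset.range m, c i (j + i),
          (Multiplicative.ofAdd (1 : ZMod n)) ^ m⟩ := by
  induction m with
  | zero =>
      refine SemidirectProduct.ext (funext fun j => ?_) ?_ <;> simp
  | succ m ih =>
      rw [List.range_succ, List.map_append, List.prod_append]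
      simp only [List.map_cons, List.map_nil, List.prod_cons, List.prod_nil, mul_one, ih]
      refine SemidirectProduct.ext (funext fun j => ?_) ?_
      · show (fun j => ∏ i ∈ Finset.range m, c i (j + i)) j *
          (wreathAction n ((Multiplicative.ofAdd (1 : ZMod n)) ^ m) (c m)) j = _
        rw [wreath_pow_smul]
        simp [Finset.prod_range_succ]
      · show (Multiplicative.ofAdd (1 : ZMod n)) ^ m * Multiplicative.ofAdd (1 : ZMod n) = _
        rw [pow_succ]

end aux


/-- There is a constant `C > 0` such that for every `n ≥ 2` the wreath product
`C₂ ≀ Cₙ` admits a generating set `S` of size `2` with `diam(C₂ ≀ Cₙ, S) ≤ C·n`. -/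
theorem stmt_13 :
    ∃ C : ℝ, 0 < C ∧ ∀ n : ℕ, 2 ≤ n →
      ∃ S : Finset (Wreath n), S.card = 2 ∧
        Subgroup.closure (S : Set (Wreath n)) = ⊤ ∧
        (groupDiam (Wreath n) S : ℝ≥0∞) ≤ ENNReal.ofReal (C * n) := by
  classical
  refine ⟨2, by norm_num, fun n hn => ?_⟩
  haveI : NeZero n := ⟨by omega⟩
  set τ : Multiplicative (ZMod n) := Multiplicative.ofAdd 1 with hτ
  set t : Wreath n := SemidirectProduct.inr τ with ht
  set δ : WreathBase n := fun x => if x = 0 then Multiplicative.ofAdd 1 else 1 with hδ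
  set s : Wreath n := ⟨δ, τ⟩ with hs
  have hts : t ≠ s := by
    intro h
    have := congrArg SemidirectProduct.left h
    have h0 := congrFun this 0
    rw [show t.left = 1 from rfl, show s.left = δ from rfl] at h0
    rw [hδ] at h0
    simp only [Pi.one_apply, if_pos rfl] at h0
    exact (by decide : (1 : Multiplicative (ZMod 2)) ≠ Multiplicative.ofAdd 1) h0
  have two_cases : ∀ v : Multiplicative (ZMod 2), v = 1 ∨ v = Multiplicative.ofAdd 1 := by
    decide
  have word : ∀ g : Wreath n, ∃ l : List (Wreath n), l.length ≤ 2 * n ∧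
      (∀ x ∈ l, x ∈ ({t, s} : Finset (Wreath n))) ∧ l.prod = g := by
    intro g
    set f : WreathBase n := g.left with hf
    set z : Multiplicative (ZMod n) := g.right with hz
    set c : ℕ → WreathBase n :=
      fun i => fun x => if x = 0 then f (-(i : ZMod n)) else 1 with hc
    set k : ℕ := z.toAdd.val with hk
    refine ⟨((List.range n).map (fun i => (⟨c i, τ⟩ : Wreath n))) ++ List.replicate k t,
      ?_, ?_, ?_⟩
    · have hkn : k < n := ZMod.val_lt _
      simp only [List.length_append, List.length_map, List.length_range,
        List.length_replicate]
      omega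
    · intro x hx
      rcases List.mem_append.1 hx with hx | hx
      · obtain ⟨i, _, rfl⟩ := List.mem_map.1 hx
        rcases two_cases (f (-(i : ZMod n))) with hv | hv
        · have hci : c i = 1 := by
            funext x
            rw [hc]
            dsimp only
            split <;> simp [hv]
          have : (⟨c i, τ⟩ : Wreath n) = t := by
            rw [hci, ht]
            rfl
          rw [this]
          simp
        · have hci : c i = δ := by
            funext x
            rw [hc, hδ]
            dsimp only
            split <;> simp [hv]
          have : (⟨c i, τ⟩ : Wreath n) = s := by rw [hci, hs]
          rw [this]
          simp
      · rw [List.eq_of_mem_replicate hx]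
        simp
    · have hrep : (List.replicate k t).prod = SemidirectProduct.inr (τ ^ k) := by
        rw [List.prod_replicate, ht]
        exact (map_pow (SemidirectProduct.inr (φ := wreathAction n)) τ k).symm
      rw [List.prod_append, wreath_prod_range, hrep]
      have hτn : τ ^ n = 1 := by
        rw [hτ, ← ofAdd_nsmul]
        simp [ZMod.natCast_self]
      have hτk : τ ^ k = z := by
        rw [hτ, ← ofAdd_nsmul]
        simp [hk, ZMod.natCast_val, ZMod.cast_id]
      refine SemidirectProduct.ext (funext fun j => ?_) ?_
      · show (fun j => ∏ i ∈ Finset.range n, c i (j + i)) j *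
          (wreathAction n (τ ^ n) (SemidirectProduct.inr (τ ^ k)).left) j = f j
        rw [hτn]
        simp only [map_one, SemidirectProduct.left_inr, MulAut.one_apply, Pi.one_apply,
          mul_one]
        rw [hc]
        dsimp only
        rw [Finset.prod_eq_single_of_mem ((-j).val)
          (Finset.mem_range.2 (ZMod.val_lt _)) ?_]
        · have hcast : (((-j).val : ℕ) : ZMod n) = -j := by
            simp [ZMod.natCast_val, ZMod.cast_id]
          rw [hcast, if_pos (by ring), neg_neg]
        · intro b hb hbne
          rw [if_neg]
          intro hcond
          apply hbne
          have hbj : (b : ZMod n) = -j := by linear_combination hcond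
          have : ((b : ZMod n)).val = b := ZMod.val_cast_of_lt (Finset.mem_range.1 hb)
          rw [← this, hbj]
      · show τ ^ n * (SemidirectProduct.inr (τ ^ k)).right = z
        rw [hτn, SemidirectProduct.right_inr, hτk, one_mul]
  refine ⟨{t, s}, ?_, ?_, ?_⟩
  · rw [Finset.card_insert_of_notMem (by simpa using hts), Finset.card_singleton]
  · rw [eq_top_iff]
    intro g _
    obtain ⟨l, -, hS, hp⟩ := word g
    rw [← hp]
    exact list_prod_mem fun x hx => Subgroup.subset_closure (Finset.mem_coe.2 (hS x hx))
  · have hle : groupDiam (Wreath n) {t, s} ≤ ((2 * n : ℕ) : ℕ∞) :=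
      sInf_le ⟨2 * n, rfl, word⟩
    have h2 : ENNReal.ofReal (2 * (n : ℝ)) = ((2 * n : ℕ) : ℝ≥0∞) := by
      rw [← ENNReal.ofReal_natCast]
      push_cast
      ring_nf
    rw [h2]
    exact_mod_cast hle
end
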